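/- For c > 0, the supremum over r > 0 of the gradient multiplier exp(ψ(r))·sech²(log(r)/c) equals M_ψ(c) = (2/(1+√(1+c²)))·exp(c²/(1+√(1+c²))), where ψ(r) = c·tanh(log(r)/c). -/

import Mathlib

open Real

/-- key pointwise bound: for `t ∈ (-1,1)` and critical point `t₀`,
`exp (c t) (1 - t²) ≤ exp (c t₀) (1 - t₀²)`. -/
lemma key_bound (c t₀ t : ℝ) (hc : 0 < c) (hcrit : c * (1 - t₀ ^ 2) = 2 * t₀)
    (h1 : 0 < t₀) (h2 : t₀ < 1) (ht : -1 < t) (ht' : t < 1) :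
    Real.exp (c * t) * (1 - t ^ 2) ≤ Real.exp (c * t₀) * (1 - t₀ ^ 2) := by
  set u := c * (t - t₀) with hu_def
  have hu1 : u < 1 := by
    nlinarith [mul_pos (mul_pos hc (show (0:ℝ) < 1 + t₀ by linarith)) (show (0:ℝ) < 1 - t by linarith)]
  have hpos : 0 < 1 - u := by linarith
  have hexp : Real.exp u ≤ 1 / (1 - u) := by
    rw [le_div_iff₀ hpos]
    have h := Real.add_one_le_exp (-u)
    have h2 : Real.exp u * Real.exp (-u) = 1 := by
      rw [← Real.exp_add]; simp
    nlinarith [Real.exp_pos u]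
  have hsplit : Real.exp (c * t) = Real.exp (c * t₀) * Real.exp u := by
    rw [← Real.exp_add, hu_def]; ring_nf
  rw [hsplit]
  have h1t : 0 ≤ 1 - t ^ 2 := by nlinarith
  have hstep : Real.exp u * (1 - t ^ 2) ≤ (1 - t ^ 2) / (1 - u) := by
    rw [div_eq_mul_inv, mul_comm (Real.exp u)]
    exact mul_le_mul_of_nonneg_left (by rwa [one_div] at hexp) h1t
  have hfinal : (1 - t ^ 2) / (1 - u) ≤ 1 - t₀ ^ 2 := by
    rw [div_le_iff₀ hpos]
    nlinarith [sq_nonneg (t - t₀)]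
  calc Real.exp (c * t₀) * Real.exp u * (1 - t ^ 2)
      = Real.exp (c * t₀) * (Real.exp u * (1 - t ^ 2)) := by ring
    _ ≤ Real.exp (c * t₀) * (1 - t₀ ^ 2) := by
        apply mul_le_mul_of_nonneg_left _ (Real.exp_pos _).le
        exact hstep.trans hfinal

lemma sech_sq (x : ℝ) : (1 / Real.cosh x) ^ 2 = 1 - Real.tanh x ^ 2 := by
  have h0 := Real.cosh_pos x
  have h := Real.cosh_sq_sub_sinh_sq x
  rw [Real.tanh_eq_sinh_div_cosh]
  field_simp
  linarith

lemma tanh_mem (x : ℝ) : -1 < Real.tanh x ∧ Real.tanh x < 1 := by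
  have h0 := Real.cosh_pos x
  have h1 := Real.cosh_sub_sinh x
  have h2 := Real.cosh_add_sinh x
  have e1 := Real.exp_pos (-x)
  have e2 := Real.exp_pos x
  rw [Real.tanh_eq_sinh_div_cosh]
  constructor
  · rw [lt_div_iff₀ h0]; nlinarith
  · rw [div_lt_iff₀ h0]; nlinarith

theorem stmt_6 (c : ℝ) (hc : 0 < c) :
    IsLUB ((fun r : ℝ =>
        Real.exp (c * Real.tanh (Real.log r / c)) * (1 / Real.cosh (Real.log r / c)) ^ 2) ''
        Set.Ioi 0)
      (2 / (1 + Real.sqrt (1 + c ^ 2)) *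
        Real.exp (c ^ 2 / (1 + Real.sqrt (1 + c ^ 2)))) := by
  set s := Real.sqrt (1 + c ^ 2) with hs_def
  have hs2 : s ^ 2 = 1 + c ^ 2 := Real.sq_sqrt (by positivity)
  have hs1 : 1 < s := by nlinarith [Real.sqrt_nonneg (1 + c ^ 2)]
  set t₀ : ℝ := (s - 1) / c with ht₀_def
  have ht₀_pos : 0 < t₀ := div_pos (by linarith) hc
  have ht₀_sq : 1 - t₀ ^ 2 = 2 / (s + 1) := by
    rw [ht₀_def]; field_simp; nlinarith
  have ht₀_lt : t₀ < 1 := by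
    nlinarith [ht₀_sq, div_pos (by norm_num : (0:ℝ) < 2) (by linarith : (0:ℝ) < s + 1),
      sq_nonneg (t₀ + 1)]
  have hcrit : c * (1 - t₀ ^ 2) = 2 * t₀ := by
    rw [ht₀_sq, ht₀_def]; field_simp; nlinarith
  have hct₀ : c * t₀ = c ^ 2 / (1 + s) := by
    rw [ht₀_def]; field_simp; nlinarith
  have hM : 2 / (1 + s) * Real.exp (c ^ 2 / (1 + s))
      = Real.exp (c * t₀) * (1 - t₀ ^ 2) := by
    rw [hct₀, ht₀_sq, mul_comm, add_comm s 1]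
  rw [hM]
  constructor
  · rintro v ⟨r, hr, rfl⟩
    obtain ⟨h1, h2⟩ := tanh_mem (Real.log r / c)
    dsimp only
    rw [sech_sq]
    exact key_bound c t₀ _ hc hcrit ht₀_pos ht₀_lt h1 h2
  · intro v hv
    have h1sub : 0 < 1 - t₀ ^ 2 := by nlinarith
    set y : ℝ := t₀ / Real.sqrt (1 - t₀ ^ 2) with hy_def
    have hsq : Real.sqrt (1 - t₀ ^ 2) ^ 2 = 1 - t₀ ^ 2 := Real.sq_sqrt h1sub.le
    have hsqpos : 0 < Real.sqrt (1 - t₀ ^ 2) := Real.sqrt_pos.mpr h1sub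
    have h1y : 1 + y ^ 2 = 1 / (1 - t₀ ^ 2) := by
      rw [hy_def, div_pow, hsq]; field_simp
      ring
    have hcosh : Real.cosh (Real.arsinh y) = 1 / Real.sqrt (1 - t₀ ^ 2) := by
      rw [Real.cosh_arsinh, h1y, one_div, Real.sqrt_inv, ← one_div]
    have htanh : Real.tanh (Real.arsinh y) = t₀ := by
      rw [Real.tanh_eq_sinh_div_cosh, Real.sinh_arsinh, hcosh, hy_def]
      field_simp
    have hval : (fun r : ℝ =>
        Real.exp (c * Real.tanh (Real.log r / c)) * (1 / Real.cosh (Real.log r / c)) ^ 2)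
        (Real.exp (c * Real.arsinh y)) = Real.exp (c * t₀) * (1 - t₀ ^ 2) := by
      simp only [Real.log_exp]
      rw [mul_div_cancel_left₀ _ hc.ne', htanh, hcosh]
      rw [one_div_one_div, hsq]
    have hmem : Real.exp (c * t₀) * (1 - t₀ ^ 2) ∈
        ((fun r : ℝ =>
        Real.exp (c * Real.tanh (Real.log r / c)) * (1 / Real.cosh (Real.log r / c)) ^ 2) ''
        Set.Ioi 0) := ⟨Real.exp (c * Real.arsinh y), Real.exp_pos _, hval⟩
    exact hv hmem
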